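/- Let ω ∈ L¹(ℝ²) ∩ L∞(ℝ²) be compactly supported with ∫_{ℝ²} ω(x) dx = 0. Then the velocity field K ∗ ω belongs to L²(ℝ²; ℝ²). -/

import Mathlib

open MeasureTheory Metric Set
open scoped ENNReal RealInnerProductSpace

noncomputable section

/-- the plane ℝ² -/
abbrev E2 := EuclideanSpace ℝ (Fin 2)

/-- rotation by π/2 : (x₁,x₂)⊥ = (−x₂,x₁) -/
def perp (x : E2) : E2 := (EuclideanSpace.equiv (Fin 2) ℝ).symm ![-(x 1), x 0]

/-- the Biot–Savart kernel K(x) = (1/2π) x⊥/|x|², extended by 0 at the origin -/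
def biotSavart (x : E2) : E2 := (1 / (2 * Real.pi * ‖x‖ ^ 2)) • perp x

/-- the convolution K ∗ ω -/
def KConv (ω : E2 → ℝ) (x : E2) : E2 := ∫ y, ω y • biotSavart (x - y)

/-- the almost-Lipschitz modulus φ(z) = z(1 − ln z) for z < 1, φ(z) = 1 for z ≥ 1 -/
def phiLog (z : ℝ) : ℝ := if z < 1 then z * (1 - Real.log z) else 1

lemma perp_apply (x : E2) : perp x = ![-(x 1), x 0] := rfl

lemma norm_perp (x : E2) : ‖perp x‖ = ‖x‖ := by
  rw [EuclideanSpace.norm_eq, EuclideanSpace.norm_eq]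
  simp [perp_apply, Fin.sum_univ_two]
  ring_nf

lemma perp_sub (x y : E2) : perp (x - y) = perp x - perp y := by
  ext i
  fin_cases i <;> simp [perp_apply] <;> ring

lemma continuous_perp : Continuous perp := by
  refine (EuclideanSpace.equiv (Fin 2) ℝ).symm.continuous.comp ?_
  refine continuous_pi fun i => ?_
  fin_cases i
  · exact ((continuous_apply 1).comp (PiLp.continuous_ofLp 2 _)).neg
  · exact (continuous_apply 0).comp (PiLp.continuous_ofLp 2 _)

lemma measurable_biotSavart : Measurable biotSavart := by
  apply Measurable.fun_smul
  · exact (measurable_const.div ((measurable_norm.pow_const 2).const_mul _))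
  · exact continuous_perp.measurable

lemma norm_biotSavart_le (z : E2) : ‖biotSavart z‖ ≤ (1 / (2 * Real.pi)) * ‖z‖⁻¹ := by
  rcases eq_or_ne z 0 with rfl | hz
  · simp [biotSavart, perp_apply]
  · have hz' : 0 < ‖z‖ := norm_pos_iff.mpr hz
    rw [biotSavart, norm_smul, norm_perp, Real.norm_eq_abs,
      abs_of_pos (by positivity : (0:ℝ) < 1 / (2 * Real.pi * ‖z‖ ^ 2))]
    rw [le_iff_lt_or_eq]; right
    field_simp

lemma biotSavart_sub_le {a b : E2} (ha : a ≠ 0) (hb : b ≠ 0) :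
    ‖biotSavart a - biotSavart b‖ ≤
      (1 / (2 * Real.pi)) *
        (‖a - b‖ / ‖a‖ ^ 2 + ‖a - b‖ * (‖a‖ + ‖b‖) / (‖a‖ ^ 2 * ‖b‖)) := by
  have hπ := Real.pi_pos
  have ha' : 0 < ‖a‖ := norm_pos_iff.mpr ha
  have hb' : 0 < ‖b‖ := norm_pos_iff.mpr hb
  have key : biotSavart a - biotSavart b =
      (1 / (2 * Real.pi * ‖a‖ ^ 2)) • perp (a - b) +
        ((1 / (2 * Real.pi * ‖a‖ ^ 2)) - (1 / (2 * Real.pi * ‖b‖ ^ 2))) • perp b := by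
    rw [perp_sub, biotSavart, biotSavart]
    module
  rw [key]
  calc ‖_ + _‖ ≤ ‖(1 / (2 * Real.pi * ‖a‖ ^ 2)) • perp (a - b)‖ +
      ‖((1 / (2 * Real.pi * ‖a‖ ^ 2)) - (1 / (2 * Real.pi * ‖b‖ ^ 2))) • perp b‖ :=
        norm_add_le _ _
    _ ≤ (1 / (2 * Real.pi)) *
        (‖a - b‖ / ‖a‖ ^ 2 + ‖a - b‖ * (‖a‖ + ‖b‖) / (‖a‖ ^ 2 * ‖b‖)) := by
      rw [norm_smul, norm_smul, norm_perp, norm_perp, Real.norm_eq_abs, Real.norm_eq_abs,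
        abs_of_pos (by positivity : (0:ℝ) < 1 / (2 * Real.pi * ‖a‖ ^ 2))]
      have habs : |1 / (2 * Real.pi * ‖a‖ ^ 2) - 1 / (2 * Real.pi * ‖b‖ ^ 2)|
          ≤ (1 / (2 * Real.pi)) * (‖a - b‖ * (‖a‖ + ‖b‖) / (‖a‖ ^ 2 * ‖b‖ ^ 2)) := by
        have hdiff : 1 / (2 * Real.pi * ‖a‖ ^ 2) - 1 / (2 * Real.pi * ‖b‖ ^ 2)
            = (1 / (2 * Real.pi)) * ((‖b‖ ^ 2 - ‖a‖ ^ 2) / (‖a‖ ^ 2 * ‖b‖ ^ 2)) := by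
          field_simp
        rw [hdiff, abs_mul, abs_of_pos (by positivity : (0:ℝ) < 1 / (2 * Real.pi)), abs_div,
          abs_of_pos (by positivity : (0:ℝ) < ‖a‖ ^ 2 * ‖b‖ ^ 2)]
        gcongr
        have h1 : |‖b‖ - ‖a‖| ≤ ‖a - b‖ := by
          rw [← norm_sub_rev]; exact abs_norm_sub_norm_le b a
        have h2 : |‖b‖ ^ 2 - ‖a‖ ^ 2| = |‖b‖ - ‖a‖| * (‖b‖ + ‖a‖) := by
          rw [← abs_of_pos (by positivity : (0:ℝ) < ‖b‖ + ‖a‖), ← abs_mul]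
          ring_nf
        rw [h2]
        calc |‖b‖ - ‖a‖| * (‖b‖ + ‖a‖) ≤ ‖a - b‖ * (‖b‖ + ‖a‖) := by
              gcongr
          _ = ‖a - b‖ * (‖a‖ + ‖b‖) := by ring
      calc 1 / (2 * Real.pi * ‖a‖ ^ 2) * ‖a - b‖ + _ * ‖b‖
          ≤ 1 / (2 * Real.pi * ‖a‖ ^ 2) * ‖a - b‖ +
            ((1 / (2 * Real.pi)) * (‖a - b‖ * (‖a‖ + ‖b‖) / (‖a‖ ^ 2 * ‖b‖ ^ 2))) * ‖b‖ := by
            gcongr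
        _ = (1 / (2 * Real.pi)) *
            (‖a - b‖ / ‖a‖ ^ 2 + ‖a - b‖ * (‖a‖ + ‖b‖) / (‖a‖ ^ 2 * ‖b‖)) := by
            field_simp

lemma biotSavart_decay {R : ℝ} (hR : 1 ≤ R) {x y : E2} (hy : ‖y‖ ≤ R) (hx : 2 * R ≤ ‖x‖) :
    ‖biotSavart (x - y) - biotSavart x‖ ≤ (14 * R / (2 * Real.pi)) / ‖x‖ ^ 2 := by
  have hπ := Real.pi_pos
  have hR0 : (0:ℝ) < R := lt_of_lt_of_le one_pos hR
  have hx0 : (0:ℝ) < ‖x‖ := lt_of_lt_of_le (by linarith) hx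
  have hax : ‖x‖ / 2 ≤ ‖x - y‖ := by
    have := norm_sub_norm_le x y
    have h2 : ‖x - y‖ ≥ ‖x‖ - R := by linarith
    linarith
  have ha0 : (0:ℝ) < ‖x - y‖ := lt_of_lt_of_le (by linarith) hax
  have ha := biotSavart_sub_le (a := x - y) (b := x)
    (norm_pos_iff.mp ha0 ) (norm_pos_iff.mp hx0)
  have hab : ‖(x - y) - x‖ = ‖y‖ := by
    rw [sub_sub_cancel_left, norm_neg]
  have haup : ‖x - y‖ ≤ (3/2) * ‖x‖ := by
    calc ‖x - y‖ ≤ ‖x‖ + ‖y‖ := norm_sub_le x y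
      _ ≤ ‖x‖ + R := by linarith
      _ ≤ (3/2) * ‖x‖ := by linarith
  refine ha.trans ?_
  rw [hab]
  have hsq : ‖x‖ ^ 2 / 4 ≤ ‖x - y‖ ^ 2 := by nlinarith
  have hsum : ‖x - y‖ + ‖x‖ ≤ (5/2) * ‖x‖ := by linarith
  have h1 : ‖y‖ / ‖x - y‖ ^ 2 ≤ 4 * R / ‖x‖ ^ 2 := by
    rw [div_le_div_iff₀ (by positivity) (by positivity)]
    nlinarith [sq_nonneg ‖x‖, norm_nonneg y]
  have h2 : ‖y‖ * (‖x - y‖ + ‖x‖) / (‖x - y‖ ^ 2 * ‖x‖) ≤ 10 * R / ‖x‖ ^ 2 := by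
    rw [div_le_div_iff₀ (by positivity) (by positivity)]
    have e1 : ‖y‖ * (‖x - y‖ + ‖x‖) ≤ R * ((5/2) * ‖x‖) :=
      mul_le_mul hy hsum (by positivity) hR0.le
    have e2 : 10 * R * (‖x‖ ^ 2 / 4) * ‖x‖ ≤ 10 * R * ‖x - y‖ ^ 2 * ‖x‖ := by
      gcongr
    nlinarith [mul_le_mul_of_nonneg_right e1 (sq_nonneg ‖x‖)]
  calc (1 / (2 * Real.pi)) * (‖y‖ / ‖x - y‖ ^ 2 + ‖y‖ * (‖x - y‖ + ‖x‖) / (‖x - y‖ ^ 2 * ‖x‖))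
      ≤ (1 / (2 * Real.pi)) * (4 * R / ‖x‖ ^ 2 + 10 * R / ‖x‖ ^ 2) := by gcongr
    _ = (14 * R / (2 * Real.pi)) / ‖x‖ ^ 2 := by field_simp; ring

lemma integrableOn_inv_norm_ball :
    IntegrableOn (fun z : E2 => ‖z‖⁻¹) (ball 0 1) volume := by
  constructor
  · exact (measurable_norm.inv).aestronglyMeasurable
  · rw [hasFiniteIntegral_iff_ofReal (ae_of_all _ fun z => by positivity)]
    set B := volume (ball (0:E2) 1) with hBdef
    have hB : B < ⊤ := measure_ball_lt_top
    set A : ℕ → Set E2 := fun n => ball 0 ((1/2:ℝ)^n) \ ball 0 ((1/2:ℝ)^(n+1)) with hA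
    have cover : ball (0:E2) 1 ⊆ {0} ∪ ⋃ n, A n := by
      intro z hz
      rcases eq_or_ne z 0 with rfl | hz0
      · exact Or.inl rfl
      · have hz1 : ‖z‖ < 1 := by simpa [mem_ball, dist_zero_right] using hz
        have hzpos : 0 < ‖z‖ := norm_pos_iff.mpr hz0
        have hex : ∃ k, (1/2:ℝ)^(k+1) ≤ ‖z‖ := by
          obtain ⟨n, hn⟩ := exists_pow_lt_of_lt_one hzpos (by norm_num : (1/2:ℝ) < 1)
          exact ⟨n, le_of_lt (lt_of_le_of_lt (pow_le_pow_of_le_one (by norm_num) (by norm_num)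
            (Nat.le_succ n)) hn)⟩
        have hm1 := Nat.find_spec hex
        set m := Nat.find hex with hmdef
        have hm2 : ‖z‖ < (1/2:ℝ)^m := by
          by_contra h
          push_neg at h
          rcases Nat.eq_zero_or_pos m with hm0 | hm0
          · rw [hm0] at h; simp at h; linarith
          · have hlt : m - 1 < m := Nat.pred_lt hm0.ne'
            have hmin := Nat.find_min hex hlt
            have heq : m - 1 + 1 = m := Nat.succ_pred_eq_of_pos hm0
            rw [heq] at hmin
            exact hmin h
        right
        refine mem_iUnion.mpr ⟨m, ?_⟩
        constructor
        · simpa [mem_ball, dist_zero_right] using hm2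
        · simp only [mem_ball, dist_zero_right, not_lt]
          exact hm1
    calc ∫⁻ z in ball (0:E2) 1, ENNReal.ofReal ‖z‖⁻¹
        ≤ ∫⁻ z in ({0} ∪ ⋃ n, A n), ENNReal.ofReal ‖z‖⁻¹ := lintegral_mono_set cover
      _ ≤ (∫⁻ z in ({(0:E2)}), ENNReal.ofReal ‖z‖⁻¹) + ∫⁻ z in (⋃ n, A n), ENNReal.ofReal ‖z‖⁻¹ :=
          lintegral_union_le _ _ _
      _ ≤ 0 + ∑' n, ∫⁻ z in A n, ENNReal.ofReal ‖z‖⁻¹ := by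
          gcongr
          · exact le_of_eq (setLIntegral_measure_zero _ _ (measure_singleton 0))
          · exact lintegral_iUnion_le _ _
      _ ≤ ∑' n, ENNReal.ofReal (2 * (1/2:ℝ)^n) * B := by
          rw [zero_add]
          gcongr with n
          calc ∫⁻ z in A n, ENNReal.ofReal ‖z‖⁻¹
              ≤ ∫⁻ _ in A n, ENNReal.ofReal (2^(n+1)) := by
                refine setLIntegral_mono measurable_const fun z hz => ?_
                refine ENNReal.ofReal_le_ofReal ?_
                have h1 : (1/2:ℝ)^(n+1) ≤ ‖z‖ := by
                  have := hz.2
                  simpa [mem_ball, dist_zero_right, not_lt] using this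
                have h2 : (0:ℝ) < (1/2:ℝ)^(n+1) := by positivity
                rw [inv_le_comm₀ (lt_of_lt_of_le h2 h1) (by positivity)]
                calc ((2:ℝ)^(n+1))⁻¹ = (1/2:ℝ)^(n+1) := by
                      rw [one_div, inv_pow]
                  _ ≤ ‖z‖ := h1
            _ = ENNReal.ofReal (2^(n+1)) * volume (A n) := setLIntegral_const _ _
            _ ≤ ENNReal.ofReal (2^(n+1)) * volume (ball (0:E2) ((1/2:ℝ)^n)) := by
                gcongr
                exact diff_subset
            _ = ENNReal.ofReal (2^(n+1)) * (ENNReal.ofReal (((1/2:ℝ)^n)^(2:ℕ)) * B) := by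
                rw [Measure.addHaar_ball volume 0 (by positivity : (0:ℝ) ≤ (1/2:ℝ)^n),
                  finrank_euclideanSpace_fin]
            _ = ENNReal.ofReal (2 * (1/2:ℝ)^n) * B := by
                rw [← mul_assoc, ← ENNReal.ofReal_mul (by positivity)]
                congr 2
                rw [one_div, inv_pow, inv_pow, pow_succ]
                field_simp
      _ < ⊤ := by
          have heq : ∀ n : ℕ, ENNReal.ofReal (2 * (1/2:ℝ)^n) * B = (2 * B) * (2:ℝ≥0∞)⁻¹^n := by
            intro n
            rw [ENNReal.ofReal_mul (by norm_num), ENNReal.ofReal_pow (by norm_num)]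
            have h12 : ENNReal.ofReal (1/2:ℝ) = (2:ℝ≥0∞)⁻¹ := by
              rw [one_div, ENNReal.ofReal_inv_of_pos (by norm_num)]
              norm_num
            rw [h12]
            have h2 : ENNReal.ofReal (2:ℝ) = 2 := by norm_num
            rw [h2]; ring
          rw [tsum_congr heq, ENNReal.tsum_mul_left, ENNReal.tsum_geometric,
            ENNReal.one_sub_inv_two]
          refine ENNReal.mul_lt_top (ENNReal.mul_lt_top (by norm_num) hB) ?_
          simp

/-- **Square-integrability of the velocity of a mean-zero vorticity.** If `ω ∈ L¹ ∩ L∞(ℝ²)` is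
compactly supported with `∫ ω = 0`, then `K ∗ ω ∈ L²(ℝ²; ℝ²)`. -/
theorem velocity_L2_of_mean_zero (ω : E2 → ℝ)
    (h1 : MemLp ω 1 (volume : Measure E2)) (htop : MemLp ω ⊤ (volume : Measure E2))
    (hsupp : HasCompactSupport ω) (hmean : ∫ x, ω x = 0) :
    MemLp (KConv ω) 2 (volume : Measure E2) := by
  have hπ := Real.pi_pos
  have hω1 : Integrable ω := memLp_one_iff_integrable.mp h1
  -- a radius containing the support
  obtain ⟨R₀, hR₀⟩ := hsupp.isBounded.subset_closedBall (0 : E2)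
  set R := max R₀ 1 with hRdef
  have hR1 : (1:ℝ) ≤ R := le_max_right _ _
  have hR0 : (0:ℝ) < R := lt_of_lt_of_le one_pos hR1
  have hsuppR : tsupport ω ⊆ closedBall 0 R :=
    hR₀.trans (closedBall_subset_closedBall (le_max_left _ _))
  -- essential sup bound
  set M := (eLpNormEssSup ω volume).toReal with hMdef
  have hMtop : eLpNormEssSup ω volume ≠ ⊤ := by
    have h := htop.eLpNorm_lt_top
    rw [eLpNorm_exponent_top] at h
    exact h.ne
  have hMae : ∀ᵐ y : E2, ‖ω y‖ ≤ M := by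
    filter_upwards [ae_le_eLpNormEssSup (f := ω) (μ := (volume : Measure E2))] with y hy
    have := ENNReal.toReal_mono hMtop hy
    simpa using this
  have hM0 : 0 ≤ M := ENNReal.toReal_nonneg
  -- measurability of KConv ω
  have hF : AEStronglyMeasurable (fun p : E2 × E2 => ω p.2 • biotSavart (p.1 - p.2))
      ((volume : Measure E2).prod (volume : Measure E2)) :=
    h1.aestronglyMeasurable.comp_snd.fun_smul
      ((measurable_biotSavart.comp (measurable_fst.sub measurable_snd)).aestronglyMeasurable)
  have hmeas : AEStronglyMeasurable (KConv ω) volume := hF.integral_prod_right'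
  -- constants
  have hFind : Integrable ((ball (0:E2) 1).indicator fun z : E2 => ‖z‖⁻¹) :=
    (integrable_indicator_iff measurableSet_ball).mpr integrableOn_inv_norm_ball
  set I₀ := ∫ z : E2, (ball (0:E2) 1).indicator (fun z => ‖z‖⁻¹) z with hI₀def
  have hI₀0 : 0 ≤ I₀ :=
    integral_nonneg fun z => indicator_nonneg (fun z _ => by positivity) z
  set N := ∫ y : E2, ‖ω y‖ with hNdef
  have hN0 : 0 ≤ N := integral_nonneg fun y => norm_nonneg _
  set C₁ := (M / (2 * Real.pi)) * I₀ + (1 / (2 * Real.pi)) * N with hC₁def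
  set C₂ := N * (14 * R / (2 * Real.pi)) with hC₂def
  have hC₁0 : 0 ≤ C₁ := by positivity
  have hC₂0 : 0 ≤ C₂ := by positivity
  -- Step 1 : uniform bound
  have step1 : ∀ x : E2, ‖KConv ω x‖ ≤ C₁ := by
    intro x
    have hint1 : Integrable fun y : E2 =>
        (M / (2 * Real.pi)) * ((ball (0:E2) 1).indicator (fun z => ‖z‖⁻¹) (x - y)) :=
      (hFind.comp_sub_left x).const_mul _
    have hint2 : Integrable fun y : E2 => (1 / (2 * Real.pi)) * ‖ω y‖ :=
      hω1.norm.const_mul _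
    have hb : ∀ᵐ y : E2, ‖ω y • biotSavart (x - y)‖ ≤
        (M / (2 * Real.pi)) * ((ball (0:E2) 1).indicator (fun z => ‖z‖⁻¹) (x - y)) +
          (1 / (2 * Real.pi)) * ‖ω y‖ := by
      filter_upwards [hMae] with y hy
      rw [norm_smul, Real.norm_eq_abs]
      by_cases hxy : ‖x - y‖ < 1
      · have hind : (ball (0:E2) 1).indicator (fun z => ‖z‖⁻¹) (x - y) = ‖x - y‖⁻¹ :=
          indicator_of_mem (by simpa [mem_ball, dist_zero_right] using hxy) _
        rw [hind]
        have : |ω y| * ‖biotSavart (x - y)‖ ≤ M * ((1 / (2 * Real.pi)) * ‖x - y‖⁻¹) :=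
          mul_le_mul hy (norm_biotSavart_le _) (norm_nonneg _) hM0
        have h2 : (0:ℝ) ≤ (1 / (2 * Real.pi)) * ‖ω y‖ := by positivity
        calc |ω y| * ‖biotSavart (x - y)‖ ≤ M * ((1 / (2 * Real.pi)) * ‖x - y‖⁻¹) := this
          _ = (M / (2 * Real.pi)) * ‖x - y‖⁻¹ := by ring
          _ ≤ _ := le_add_of_nonneg_right h2
      · push_neg at hxy
        have hind : (ball (0:E2) 1).indicator (fun z => ‖z‖⁻¹) (x - y) = 0 :=
          indicator_of_notMem (by simpa [mem_ball, dist_zero_right, not_lt] using hxy) _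
        rw [hind, mul_zero, zero_add]
        have hinv : ‖x - y‖⁻¹ ≤ 1 := inv_le_one_of_one_le₀ hxy
        calc |ω y| * ‖biotSavart (x - y)‖
            ≤ |ω y| * ((1 / (2 * Real.pi)) * ‖x - y‖⁻¹) :=
              mul_le_mul_of_nonneg_left (norm_biotSavart_le _) (abs_nonneg _)
          _ ≤ |ω y| * ((1 / (2 * Real.pi)) * 1) := by
              gcongr
          _ = (1 / (2 * Real.pi)) * ‖ω y‖ := by rw [Real.norm_eq_abs]; ring
    have hle := norm_integral_le_of_norm_le (hint1.add hint2) hb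
    simp only [Pi.add_apply] at hle
    refine le_trans hle ?_
    rw [integral_add hint1 hint2, integral_const_mul, integral_const_mul,
      integral_sub_left_eq_self (fun z => (ball (0:E2) 1).indicator (fun z => ‖z‖⁻¹) z) volume x]
  -- Step 2 : decay at infinity
  have step2 : ∀ x : E2, 2 * R ≤ ‖x‖ → ‖KConv ω x‖ ≤ C₂ / ‖x‖ ^ 2 := by
    intro x hx
    have hx0 : (0:ℝ) < ‖x‖ := lt_of_lt_of_le (by linarith) hx
    have hint1 : Integrable fun y : E2 => ω y • biotSavart (x - y) := by
      refine Integrable.mono'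
        (g := fun y : E2 =>
          (closedBall (0:E2) R).indicator (fun _ => M * ((1 / (2 * Real.pi)) * R⁻¹)) y)
        ((integrable_indicator_iff measurableSet_closedBall).mpr
          (integrableOn_const measure_closedBall_lt_top.ne))
        (h1.aestronglyMeasurable.smul
          ((measurable_biotSavart.comp (measurable_const.sub measurable_id)).aestronglyMeasurable))
        ?_
      filter_upwards [hMae] with y hy
      by_cases hys : y ∈ tsupport ω
      · have hyR : ‖y‖ ≤ R := by
          simpa [mem_closedBall, dist_zero_right] using hsuppR hys
        have hxy : R ≤ ‖x - y‖ := by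
          have := norm_sub_norm_le x y
          linarith
        rw [indicator_of_mem (by simpa [mem_closedBall, dist_zero_right] using hyR)]
        rw [norm_smul]
        have hinv : ‖x - y‖⁻¹ ≤ R⁻¹ := by
          apply inv_anti₀ hR0 hxy
        calc ‖ω y‖ * ‖biotSavart (x - y)‖
            ≤ M * ((1 / (2 * Real.pi)) * ‖x - y‖⁻¹) :=
              mul_le_mul hy (norm_biotSavart_le _) (norm_nonneg _) hM0
          _ ≤ M * ((1 / (2 * Real.pi)) * R⁻¹) := by gcongr
      · have hzero : ω y = 0 := image_eq_zero_of_notMem_tsupport hys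
        rw [hzero, zero_smul, norm_zero]
        exact indicator_nonneg (fun z _ => by positivity) y
    have hint2 : Integrable fun y : E2 => ω y • biotSavart x := hω1.smul_const _
    have hrw : KConv ω x = ∫ y, ω y • (biotSavart (x - y) - biotSavart x) := by
      have heq : (fun y : E2 => ω y • (biotSavart (x - y) - biotSavart x)) =
          fun y => ω y • biotSavart (x - y) - ω y • biotSavart x :=
        funext fun y => smul_sub _ _ _
      rw [KConv, heq, integral_sub hint1 hint2, integral_smul_const, hmean, zero_smul, sub_zero]
    rw [hrw]
    have hb : ∀ y : E2, ‖ω y • (biotSavart (x - y) - biotSavart x)‖ ≤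
        ‖ω y‖ * ((14 * R / (2 * Real.pi)) / ‖x‖ ^ 2) := by
      intro y
      by_cases hys : y ∈ tsupport ω
      · have hyR : ‖y‖ ≤ R := by
          simpa [mem_closedBall, dist_zero_right] using hsuppR hys
        rw [norm_smul]
        exact mul_le_mul_of_nonneg_left (biotSavart_decay hR1 hyR hx) (norm_nonneg _)
      · have hzero : ω y = 0 := image_eq_zero_of_notMem_tsupport hys
        rw [hzero, zero_smul, norm_zero]
        positivity
    have hle := norm_integral_le_of_norm_le (hω1.norm.mul_const _) (ae_of_all _ hb)
    refine hle.trans ?_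
    rw [integral_mul_const, hC₂def, hNdef]
    exact le_of_eq (by ring)
  -- the dominating function
  set g : E2 → ℝ := fun x => if ‖x‖ ≤ 2 * R then C₁ else C₂ / ‖x‖ ^ 2 with hgdef
  have hgmeas0 : Measurable g := by
    apply Measurable.ite (measurableSet_le measurable_norm measurable_const) measurable_const
    exact measurable_const.div (measurable_norm.pow_const 2)
  have hgmeas : AEStronglyMeasurable g volume := hgmeas0.aestronglyMeasurable
  have hgnonneg : ∀ x : E2, 0 ≤ g x := by
    intro x
    by_cases h : ‖x‖ ≤ 2 * R
    · simp only [hgdef, if_pos h]; exact hC₁0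
    · simp only [hgdef, if_neg h]; positivity
  have hgsq : Integrable fun x : E2 => g x ^ 2 := by
    refine Integrable.mono'
      (g := fun x : E2 => (closedBall (0:E2) (2 * R)).indicator (fun _ => C₁ ^ 2) x +
        (16 * C₂ ^ 2) * (1 + ‖x‖) ^ (-(4:ℝ)))
      (((integrable_indicator_iff measurableSet_closedBall).mpr
          (integrableOn_const measure_closedBall_lt_top.ne)).add
        ((integrable_one_add_norm (E := E2)
          (by rw [finrank_euclideanSpace_fin]; norm_num)).const_mul _))
      ((hgmeas0.pow_const 2).aestronglyMeasurable) (ae_of_all _ fun x => ?_)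
    rw [Real.norm_eq_abs, abs_of_nonneg (sq_nonneg _)]
    by_cases h : ‖x‖ ≤ 2 * R
    · have hind : (closedBall (0:E2) (2 * R)).indicator (fun _ => C₁ ^ 2) x = C₁ ^ 2 :=
        indicator_of_mem (by simpa [mem_closedBall, dist_zero_right] using h) _
      have hsec : (0:ℝ) ≤ (16 * C₂ ^ 2) * (1 + ‖x‖) ^ (-(4:ℝ)) := by positivity
      simp only [hgdef, if_pos h]
      rw [hind]
      linarith
    · have hind : (closedBall (0:E2) (2 * R)).indicator (fun _ => C₁ ^ 2) x = 0 :=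
        indicator_of_notMem (by simpa [mem_closedBall, dist_zero_right] using h) _
      simp only [hgdef, if_neg h]
      rw [hind, zero_add]
      push_neg at h
      have hx1 : (1:ℝ) ≤ ‖x‖ := by linarith
      have hx0 : (0:ℝ) < ‖x‖ := by linarith
      have hrpow : (1 + ‖x‖) ^ (-(4:ℝ)) = ((1 + ‖x‖) ^ (4:ℕ))⁻¹ := by
        rw [Real.rpow_neg (by positivity), ← Real.rpow_natCast (1 + ‖x‖) 4]
        norm_num
      have h16 : (1 + ‖x‖) ^ (4:ℕ) ≤ 16 * ‖x‖ ^ (4:ℕ) := by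
        calc (1 + ‖x‖) ^ (4:ℕ) ≤ (2 * ‖x‖) ^ (4:ℕ) := by
              gcongr
              linarith
          _ = 16 * ‖x‖ ^ (4:ℕ) := by ring
      have hfinal : (C₂ / ‖x‖ ^ 2) ^ 2 ≤ 16 * C₂ ^ 2 / (1 + ‖x‖) ^ (4:ℕ) := by
        rw [div_pow, div_le_div_iff₀ (by positivity) (by positivity)]
        calc C₂ ^ 2 * (1 + ‖x‖) ^ (4:ℕ) ≤ C₂ ^ 2 * (16 * ‖x‖ ^ (4:ℕ)) := by
              gcongr
          _ = 16 * C₂ ^ 2 * (‖x‖ ^ 2) ^ 2 := by ring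
      rw [hrpow, ← div_eq_mul_inv]
      exact hfinal
  have hgL2 : MemLp g 2 volume := (memLp_two_iff_integrable_sq hgmeas).mpr hgsq
  refine MemLp.of_le hgL2 hmeas (ae_of_all _ fun x => ?_)
  rw [Real.norm_eq_abs, abs_of_nonneg (hgnonneg x)]
  by_cases h : ‖x‖ ≤ 2 * R
  · simp only [hgdef, if_pos h]; exact step1 x
  · simp only [hgdef, if_neg h]
    push_neg at h
    exact step2 x h.le

end
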